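/- Let σ: A^r_k → A^r_k be given by coordinate functions f_i = Σ_j a_{ij} x_j with a_{ij} ∈ k[x₁,…,x_r], and suppose the origin is an isolated zero of σ. Then the image of det(a_{ij}) in the local quotient ring Q = k[x₁,…,x_r]_{(x₁,…,x_r)}/⟨f₁,…,f_r⟩ is independent of the choice of the a_{ij} with f_i = Σ_j a_{ij} x_j. -/

import Mathlib

open MvPolynomial Matrix


lemma syz (k : Type) [Field k] :
    ∀ (r : ℕ) (w : Fin r → MvPolynomial (Fin r) k),
    (∑ j, w j * X j) = 0 →
    ∃ c : Fin r → Fin r → MvPolynomial (Fin r) k,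
      ∀ j, w j = ∑ p, (c p j - c j p) * X p := by
  intro r
  induction r with
  | zero => exact fun w _ => ⟨0, fun j => j.elim0⟩
  | succ r ih =>
    intro w hw
    set e := finSuccEquiv k r with he
    set W : Fin (r + 1) → Polynomial (MvPolynomial (Fin r) k) := fun j => e (w j) with hWdef
    have hrel : W 0 * Polynomial.X
        + ∑ i : Fin r, W i.succ * Polynomial.C (X i) = 0 := by
      have := congrArg e hw
      rw [Fin.sum_univ_succ] at this
      simpa [he, _root_.map_sum, _root_.map_mul, finSuccEquiv_X_zero, finSuccEquiv_X_succ] using this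
    set U : Fin r → MvPolynomial (Fin r) k := fun i => (W i.succ).coeff 0 with hUdef
    set V : Fin r → Polynomial (MvPolynomial (Fin r) k) := fun i => (W i.succ).divX with hVdef
    have hW : ∀ i, W i.succ = V i * Polynomial.X + Polynomial.C (U i) :=
      fun i => (Polynomial.divX_mul_X_add _).symm
    have h0 : (∑ i, U i * X i) = 0 := by
      have := congrArg (fun p => Polynomial.coeff p 0) hrel
      simpa [Polynomial.mul_coeff_zero, Polynomial.finset_sum_coeff] using this
    have hfactor : (W 0 + ∑ i, V i * Polynomial.C (X i)) * Polynomial.X = 0 := by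
      have expand : ∀ i : Fin r, W i.succ * Polynomial.C (X i)
          = V i * Polynomial.C (X i) * Polynomial.X + Polynomial.C (U i * X i) := by
        intro i; rw [hW i, add_mul, _root_.map_mul]; ring
      calc (W 0 + ∑ i, V i * Polynomial.C (X i)) * Polynomial.X
          = W 0 * Polynomial.X + ∑ i, (V i * Polynomial.C (X i) * Polynomial.X
              + Polynomial.C (U i * X i)) - Polynomial.C (∑ i, U i * X i) := by
            rw [Finset.sum_add_distrib, _root_.map_sum, ← Finset.sum_mul]
            ring
        _ = 0 := by
            rw [← Finset.sum_congr rfl fun i _ => expand i, hrel, h0, map_zero, sub_zero]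
    have hW0 : W 0 = - ∑ i, V i * Polynomial.C (X i) := by
      rcases mul_eq_zero.mp hfactor with h | h
      · linear_combination h
      · exact absurd h Polynomial.X_ne_zero
    obtain ⟨c', hc'⟩ := ih U h0
    set cc : Fin (r + 1) → Fin (r + 1) → Polynomial (MvPolynomial (Fin r) k) :=
      fun p q => Fin.cases (Fin.cases 0 (fun j => V j) q)
        (fun p' => Fin.cases 0 (fun q' => Polynomial.C (c' p' q')) q) p with hccdef
    have key : ∀ j, W j = ∑ p, (cc p j - cc j p) * e (X p) := by
      intro j
      rw [Fin.sum_univ_succ]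
      refine Fin.cases ?_ ?_ j
      · simp only [hccdef, Fin.cases_zero, Fin.cases_succ, finSuccEquiv_X_zero,
          finSuccEquiv_X_succ, sub_self, zero_mul, zero_add, zero_sub, neg_mul, he]
        rw [hW0, ← Finset.sum_neg_distrib]
        exact Finset.sum_congr rfl fun x _ => by ring
      · intro j'
        simp only [hccdef, Fin.cases_zero, Fin.cases_succ, finSuccEquiv_X_zero,
          finSuccEquiv_X_succ, sub_zero, he]
        rw [hW j']
        congr 1
        rw [hc' j', _root_.map_sum]
        exact Finset.sum_congr rfl fun p _ => by rw [_root_.map_mul, _root_.map_sub]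
    refine ⟨fun p q => e.symm (cc p q), fun j => ?_⟩
    have : w j = e.symm (W j) := by simp [hWdef]
    rw [this, key j, _root_.map_sum]
    exact Finset.sum_congr rfl fun p _ => by
      rw [_root_.map_mul, _root_.map_sub, AlgEquiv.symm_apply_apply]


lemma cramer_ident (k : Type) [Field k] {r : ℕ}
    (B : Matrix (Fin r) (Fin r) (MvPolynomial (Fin r) k)) (i p q : Fin r) :
    X p * (B.updateRow i (Pi.single q 1)).det - X q * (B.updateRow i (Pi.single p 1)).det
      ∈ Ideal.span (Set.range fun l => ∑ j, B l j * X j) := by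
  set N := B.updateRow i (Pi.single q 1) with hN
  set xv : Fin r → MvPolynomial (Fin r) k := fun j => X j with hxv
  have key : N.det • xv = N.adjugate *ᵥ (N *ᵥ xv) := by
    rw [Matrix.mulVec_mulVec, Matrix.adjugate_mul, Matrix.smul_mulVec, Matrix.one_mulVec]
  have keyp : N.det * X p = ∑ l, N.adjugate p l * (N *ᵥ xv) l := by
    have := congrFun key p
    simpa [Matrix.mulVec, dotProduct, hxv, mul_comm] using this
  have hvi : (N *ᵥ xv) i = X q := by
    simp [Matrix.mulVec, dotProduct, hN, Matrix.updateRow_self, Pi.single_apply,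
      ite_mul, hxv]
  have hadj : N.adjugate p i = (B.updateRow i (Pi.single p 1)).det := by
    rw [Matrix.adjugate_apply]
    congr 1
    ext l j
    by_cases h : l = i <;> simp [Matrix.updateRow_apply, h, hN]
  have hsplit : N.det * X p = (B.updateRow i (Pi.single p 1)).det * X q
      + ∑ l ∈ Finset.univ.erase i, N.adjugate p l * (N *ᵥ xv) l := by
    rw [keyp, ← Finset.add_sum_erase _ _ (Finset.mem_univ i), hvi, hadj]
  have hrest : ∀ l ∈ Finset.univ.erase i,
      N.adjugate p l * (N *ᵥ xv) l
        ∈ Ideal.span (Set.range fun l => ∑ j, B l j * X j) := by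
    intro l hl
    have hli : l ≠ i := Finset.ne_of_mem_erase hl
    have : (N *ᵥ xv) l = ∑ j, B l j * X j := by
      simp [Matrix.mulVec, dotProduct, hN, Matrix.updateRow_ne hli, hxv]
    rw [this]
    exact Ideal.mul_mem_left _ _ (Ideal.subset_span ⟨l, rfl⟩)
  have : X p * N.det - X q * (B.updateRow i (Pi.single p 1)).det
      = ∑ l ∈ Finset.univ.erase i, N.adjugate p l * (N *ᵥ xv) l := by
    rw [mul_comm (X p) N.det, hsplit]; ring
  rw [this]
  exact Ideal.sum_mem _ hrest

lemma det_update_basis (k : Type) [Field k] {r : ℕ}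
    (A : Matrix (Fin r) (Fin r) (MvPolynomial (Fin r) k)) (i : Fin r)
    (w : Fin r → MvPolynomial (Fin r) k) :
    (A.updateRow i w).det = ∑ j, w j * (A.updateRow i (Pi.single j 1)).det := by
  set eb : Fin r → Fin r → MvPolynomial (Fin r) k := fun j => Pi.single j 1 with heb
  have aux : ∀ s : Finset (Fin r),
      (A.updateRow i (∑ j ∈ s, w j • eb j)).det
        = ∑ j ∈ s, w j * (A.updateRow i (eb j)).det := by
    intro s
    induction s using Finset.induction with
    | empty =>
        simp only [Finset.sum_empty]
        exact Matrix.det_eq_zero_of_row_eq_zero i (fun j => by simp)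
    | insert _ _ hns ih =>
        rw [Finset.sum_insert hns, Matrix.det_updateRow_add, Matrix.det_updateRow_smul, ih,
          Finset.sum_insert hns]
  have hw : w = ∑ j, w j • eb j := by
    ext j
    simp [heb, Pi.single_apply, Finset.sum_ite_eq']
  calc (A.updateRow i w).det = (A.updateRow i (∑ j, w j • eb j)).det := by rw [← hw]
    _ = ∑ j, w j * (A.updateRow i (eb j)).det := aux Finset.univ

lemma row_step (k : Type) [Field k] {r : ℕ}
    (B : Matrix (Fin r) (Fin r) (MvPolynomial (Fin r) k)) (i : Fin r)
    (w : Fin r → MvPolynomial (Fin r) k) (hw : ∑ j, w j * X j = 0) :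
    (B.updateRow i w).det ∈ Ideal.span (Set.range fun l => ∑ j, B l j * X j) := by
  obtain ⟨c, hc⟩ := syz k r w hw
  rw [det_update_basis]
  set C : Fin r → MvPolynomial (Fin r) k :=
    fun j => (B.updateRow i (Pi.single j 1)).det with hC
  have main : ∑ j, w j * C j = ∑ j, ∑ p, c p j * (X p * C j - X j * C p) := by
    have step1 : ∀ j, w j * C j = ∑ p, (c p j * (X p * C j) - c j p * (X p * C j)) := by
      intro j; rw [hc j, Finset.sum_mul]
      exact Finset.sum_congr rfl fun p _ => by ring
    rw [Finset.sum_congr rfl fun j _ => step1 j]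
    rw [Finset.sum_congr rfl fun (j : Fin r) (_ : j ∈ Finset.univ) =>
      (Finset.sum_sub_distrib (s := Finset.univ) _ _)]
    rw [Finset.sum_sub_distrib]
    have h2 : ∑ j, ∑ p, c j p * (X p * C j) = ∑ j, ∑ p, c p j * (X j * C p) :=
      Finset.sum_comm
    rw [h2, ← Finset.sum_sub_distrib]
    refine Finset.sum_congr rfl fun j _ => ?_
    rw [← Finset.sum_sub_distrib]
    exact Finset.sum_congr rfl fun p _ => by ring
  rw [main]
  exact Ideal.sum_mem _ fun j _ => Ideal.sum_mem _ fun p _ =>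
    Ideal.mul_mem_left _ _ (cramer_ident k B i p j)

lemma main_mem (k : Type) [Field k] {r : ℕ} (f : Fin r → MvPolynomial (Fin r) k)
    (a a' : Fin r → Fin r → MvPolynomial (Fin r) k)
    (ha : ∀ i, f i = ∑ j, a i j * X j) (ha' : ∀ i, f i = ∑ j, a' i j * X j) :
    (Matrix.of a').det - (Matrix.of a).det ∈ Ideal.span (Set.range f) := by
  set M : ℕ → Matrix (Fin r) (Fin r) (MvPolynomial (Fin r) k) :=
    fun t => Matrix.of fun l j => if (l : ℕ) < t then a' l j else a l j with hM
  have hM0 : M 0 = Matrix.of a := by ext l j; simp [hM]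
  have hMr : M r = Matrix.of a' := by ext l j; simp [hM, l.isLt]
  have claim : ∀ t, (M t).det - (M 0).det ∈ Ideal.span (Set.range f) := by
    intro t
    induction t with
    | zero => simp
    | succ t ih =>
      by_cases h : t < r
      · set i : Fin r := ⟨t, h⟩ with hi
        have hrowi : M t i = a i := by
          funext j; simp [hM, hi]
        have e1 : M (t + 1) = (M t).updateRow i (a' i) := by
          ext l j
          rcases eq_or_ne l i with rfl | hne
          · simp [hM, Matrix.updateRow_self, hi]
          · have hne' : (l : ℕ) ≠ t := by
              intro hl
              exact hne (Fin.ext (by simp [hl, hi]))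
            have hiff : ((l : ℕ) < t + 1) ↔ ((l : ℕ) < t) := by omega
            simp [hM, Matrix.updateRow_ne hne, hiff]
        have hdet : (M (t + 1)).det
            = (M t).det + ((M t).updateRow i (fun j => a' i j - a i j)).det := by
          rw [e1,
            show (M t).det = ((M t).updateRow i (a i)).det from by
              rw [← hrowi, Matrix.updateRow_eq_self],
            ← Matrix.det_updateRow_add,
            show (a i + fun j => a' i j - a i j) = a' i from by funext j; simp]
        have hw : ∑ j, (a' i j - a i j) * X j = 0 := by
          have : ∑ j, (a' i j - a i j) * X j
              = (∑ j, a' i j * X j) - ∑ j, a i j * X j := by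
            rw [← Finset.sum_sub_distrib]
            exact Finset.sum_congr rfl fun j _ => by ring
          rw [this, ← ha, ← ha', sub_self]
        have hrange : (fun l => ∑ j, (M t) l j * X j) = f := by
          funext l
          by_cases hl : (l : ℕ) < t
          · simp only [hM, Matrix.of_apply, if_pos hl]
            exact (ha' l).symm
          · simp only [hM, Matrix.of_apply, if_neg hl]
            exact (ha l).symm
        have hmem := row_step k (M t) i _ hw
        rw [hrange] at hmem
        have : (M (t + 1)).det - (M 0).det
            = ((M t).det - (M 0).det) + ((M t).updateRow i (fun j => a' i j - a i j)).det := by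
          rw [hdet]; ring
        rw [this]
        exact Ideal.add_mem _ ih hmem
      · have : M (t + 1) = M t := by
          ext l j
          have h1 : (l : ℕ) < t := lt_of_lt_of_le l.isLt (not_lt.mp h)
          have h2 : (l : ℕ) < t + 1 := by omega
          simp [hM, h1, h2]
        rw [this]
        exact ih
  have := claim r
  rwa [hMr, hM0] at this

/-- The maximal ideal `(x₁, …, x_r)` of `k[x₁, …, x_r]` corresponding to the origin. -/
noncomputable def originIdeal (k : Type) [Field k] (r : ℕ) : Ideal (MvPolynomial (Fin r) k) :=
  Ideal.span (Set.range (X : Fin r → MvPolynomial (Fin r) k))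

/-- Let `σ : 𝔸ʳ → 𝔸ʳ` have coordinate functions `fᵢ = Σⱼ aᵢⱼ xⱼ`, with the origin an
isolated zero of `σ` (the local quotient ring `Q = k[x]_{(x)}/⟨f⟩` is finite, expressed by
saying a power of the maximal ideal of the localization is contained in `⟨f⟩`).  Then the
image of `det (aᵢⱼ)` in `Q` is independent of the choice of `aᵢⱼ` with `fᵢ = Σⱼ aᵢⱼ xⱼ`. -/
theorem stmt13 (k : Type) [Field k] (r : ℕ)
    (f : Fin r → MvPolynomial (Fin r) k)
    (a a' : Fin r → Fin r → MvPolynomial (Fin r) k)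
    (ha : ∀ i, f i = ∑ j, a i j * X j)
    (ha' : ∀ i, f i = ∑ j, a' i j * X j)
    [hp : (originIdeal k r).IsPrime]
    (hiso : ∃ m : ℕ,
      (Ideal.map
          (algebraMap (MvPolynomial (Fin r) k) (Localization.AtPrime (originIdeal k r)))
          (originIdeal k r)) ^ m ≤
        Ideal.map
          (algebraMap (MvPolynomial (Fin r) k) (Localization.AtPrime (originIdeal k r)))
          (Ideal.span (Set.range f))) :
    Ideal.Quotient.mk
        (Ideal.map
          (algebraMap (MvPolynomial (Fin r) k) (Localization.AtPrime (originIdeal k r)))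
          (Ideal.span (Set.range f)))
        (algebraMap (MvPolynomial (Fin r) k) (Localization.AtPrime (originIdeal k r))
          (Matrix.det (Matrix.of a))) =
      Ideal.Quotient.mk
        (Ideal.map
          (algebraMap (MvPolynomial (Fin r) k) (Localization.AtPrime (originIdeal k r)))
          (Ideal.span (Set.range f)))
        (algebraMap (MvPolynomial (Fin r) k) (Localization.AtPrime (originIdeal k r))
          (Matrix.det (Matrix.of a'))) := by
  rw [Ideal.Quotient.eq, ← _root_.map_sub]
  refine Ideal.mem_map_of_mem _ ?_
  have h := main_mem k f a a' ha ha'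
  have hs : Matrix.det (Matrix.of a) - Matrix.det (Matrix.of a')
      = -((Matrix.of a').det - (Matrix.of a).det) := by ring
  rw [hs]
  exact neg_mem h
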